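/- Let p be a prime, S a finite p-group, and F a fusion system on S. Then F is saturated if and only if F satisfies Axiom I_S (Aut_S(S) is a Sylow p-subgroup of Aut_F(S)) together with Axiom II (every φ ∈ Hom_F(P,S) such that φ(P) is fully F-centralized extends to a morphism in Hom_F(N_φ,S)). In particular, Axioms I_S and II together imply Axiom I: every fully F-normalized subgroup P ≤ S is fully F-centralized and Aut_S(P) is a Sylow p-subgroup of Aut_F(P). -/

import Mathlib

/-! ## Collections of morphisms between subgroups -/

section Collections

variable {S : Type*} [Group S]

/-- The conjugation homomorphism `P →* S`, `u ↦ s * u * s⁻¹`. -/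
def conjHom (s : S) (P : Subgroup S) : P →* S :=
  (MulAut.conj s).toMonoidHom.comp P.subtype

/-- A "collection" of morphism sets on the poset of subgroups of `S`:
for each pair of subgroups `P Q ≤ S` a set of group homomorphisms `P →* S`
(to be thought of as morphisms from `P` to `Q`, i.e. maps landing in `Q`). -/
abbrev Collection (S : Type*) [Group S] :=
  ∀ (P : Subgroup S), Subgroup S → Set (P →* S)

namespace Collection

/-- `P` and `Q` are conjugate in the collection `C` if some morphism of `C`
restricts to an isomorphism from `P` onto `Q`. -/
def IsConj (C : Collection S) (P Q : Subgroup S) : Prop :=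
  ∃ φ ∈ C P Q, MonoidHom.range φ = Q

/-- `P` is fully centralized: its centralizer has maximal order in its conjugacy class. -/
def FullyCentralized (C : Collection S) (P : Subgroup S) : Prop :=
  ∀ Q : Subgroup S, C.IsConj P Q →
    Nat.card (Subgroup.centralizer (Q : Set S)) ≤ Nat.card (Subgroup.centralizer (P : Set S))

/-- `P` is fully normalized: its normalizer has maximal order in its conjugacy class. -/
def FullyNormalized (C : Collection S) (P : Subgroup S) : Prop :=
  ∀ Q : Subgroup S, C.IsConj P Q → Nat.card (Subgroup.normalizer (Q : Set S)) ≤ Nat.card (Subgroup.normalizer (P : Set S))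

end Collection

/-- The set `Aut_S(P)` of automorphisms of `P` induced by conjugation by elements of the
normalizer `N_S(P)`, as a set of homomorphisms `P →* S`. -/
def autSSet (P : Subgroup S) : Set (P →* S) :=
  {φ | ∃ s ∈ Subgroup.normalizer (P : Set S), φ = conjHom s P}

/-- `Aut_S(P)` is a Sylow `p`-subgroup of `Aut_C(P) = C P P`:  `Aut_S(P)` is contained
in `Aut_C(P)`, has `p`-power order, and has index prime to `p` in `Aut_C(P)`. -/
def Collection.AutSIsSylow (p : ℕ) (C : Collection S) (P : Subgroup S) : Prop :=
  autSSet P ⊆ C P P ∧ (∃ n : ℕ, Nat.card (autSSet P) = p ^ n) ∧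
    ∃ k : ℕ, ¬ p ∣ k ∧ Nat.card (C P P) = k * Nat.card (autSSet P)

/-- A collection is level-wise closed if it contains all conjugation maps induced by `S`,
the inverse of every isomorphism it contains, and all composites of composable
isomorphisms it contains. -/
def LevelwiseClosed (C : Collection S) : Prop :=
  (∀ (P Q : Subgroup S) (s : S), (∀ u ∈ P, s * u * s⁻¹ ∈ Q) → conjHom s P ∈ C P Q) ∧
  (∀ (P Q : Subgroup S), ∀ φ ∈ C P Q, MonoidHom.range φ = Q → ∀ ψ : Q →* S,
    (∀ (u : P) (hq : (φ u : S) ∈ Q), ψ ⟨φ u, hq⟩ = u) → ψ ∈ C Q P) ∧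
  (∀ (P Q R : Subgroup S) (φ : P →* S), φ ∈ C P Q → ∀ ψ : Q →* S, ψ ∈ C Q R →
    ∀ hφ : MonoidHom.range φ = Q, MonoidHom.range ψ = R →
    ψ.comp (φ.codRestrict Q (fun u => hφ ▸ show φ u ∈ φ.range from ⟨u, rfl⟩)) ∈ C P R)

end Collections

/-! ## Fusion systems -/

section Fusion

variable {S : Type*} [Group S]

/-- A fusion system on a group `S`: for each pair of subgroups `P, Q ≤ S`, a set
`Hom P Q` of injective homomorphisms `P → Q` (represented as homomorphisms `P →* S`
with image contained in `Q`), containing all conjugation maps induced by `S`, closed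
under composition, and such that every morphism restricts to an isomorphism onto its
image lying in the fusion system, whose inverse also lies in the fusion system. -/
structure FusionSystem (S : Type*) [Group S] where
  Hom : Collection S
  injective' : ∀ {P Q : Subgroup S} {φ : P →* S}, φ ∈ Hom P Q → Function.Injective φ
  mapsTo' : ∀ {P Q : Subgroup S} {φ : P →* S}, φ ∈ Hom P Q → ∀ u : P, φ u ∈ Q
  conj_mem' : ∀ (P Q : Subgroup S) (s : S), (∀ u ∈ P, s * u * s⁻¹ ∈ Q) →
    conjHom s P ∈ Hom P Q
  comp_mem' : ∀ {P Q R : Subgroup S} {φ : P →* S} {ψ : Q →* S},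
    (hφ : φ ∈ Hom P Q) → (hψ : ψ ∈ Hom Q R) →
    ψ.comp (φ.codRestrict Q (mapsTo' hφ)) ∈ Hom P R
  target_mem' : ∀ {P Q : Subgroup S} {φ : P →* S}, φ ∈ Hom P Q → φ ∈ Hom P φ.range
  inv_mem' : ∀ {P Q : Subgroup S} {φ : P →* S}, φ ∈ Hom P Q →
    ∃ ψ ∈ Hom φ.range P, ∀ u : P, ψ ⟨φ u, ⟨u, rfl⟩⟩ = u

/-- The subgroup `N_φ = {x ∈ N_S(P) | ∃ y ∈ N_S(φ(P)), ∀ u ∈ P, φ(xux⁻¹) = yφ(u)y⁻¹}`. -/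
def Nphi (P : Subgroup S) (φ : P →* S) : Subgroup S where
  carrier := {x | x ∈ Subgroup.normalizer (P : Set S) ∧ ∃ y ∈ Subgroup.normalizer (φ.range : Set S),
    ∀ (u v : S) (hu : u ∈ P) (hv : v ∈ P), v = x * u * x⁻¹ →
      φ ⟨v, hv⟩ = y * φ ⟨u, hu⟩ * y⁻¹}
  one_mem' := by
    refine ⟨(Subgroup.normalizer (P : Set S)).one_mem, 1, (Subgroup.normalizer (φ.range : Set S)).one_mem, ?_⟩
    intro u v hu hv hveq
    have h1 : (⟨v, hv⟩ : P) = ⟨u, hu⟩ := Subtype.ext (show v = u by rw [hveq]; group)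
    rw [h1]; group
  mul_mem' := by
    rintro x₁ x₂ ⟨hx₁, y₁, hy₁, h₁⟩ ⟨hx₂, y₂, hy₂, h₂⟩
    refine ⟨mul_mem hx₁ hx₂, y₁ * y₂, mul_mem hy₁ hy₂, ?_⟩
    intro u v hu hv hveq
    have hw : x₂ * u * x₂⁻¹ ∈ P := (Subgroup.mem_normalizer_iff.mp hx₂ u).mp hu
    have e1 : φ ⟨v, hv⟩ = y₁ * φ ⟨x₂ * u * x₂⁻¹, hw⟩ * y₁⁻¹ :=
      h₁ _ _ hw hv (by rw [hveq]; group)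
    have e2 : φ ⟨x₂ * u * x₂⁻¹, hw⟩ = y₂ * φ ⟨u, hu⟩ * y₂⁻¹ := h₂ _ _ hu hw rfl
    rw [e1, e2]; group
  inv_mem' := by
    rintro x ⟨hx, y, hy, h⟩
    refine ⟨Subgroup.inv_mem _ hx, y⁻¹, Subgroup.inv_mem _ hy, ?_⟩
    intro u v hu hv hveq
    have e1 : φ ⟨u, hu⟩ = y * φ ⟨v, hv⟩ * y⁻¹ :=
      h _ _ hv hu (by rw [hveq]; group)
    rw [e1]; group

namespace FusionSystem

/-- Axiom I of saturation: every fully normalized subgroup is fully centralized and its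
`S`-automorphism group is a Sylow `p`-subgroup of its full automorphism group. -/
def AxiomI (p : ℕ) (F : FusionSystem S) : Prop :=
  ∀ P : Subgroup S, F.Hom.FullyNormalized P →
    F.Hom.FullyCentralized P ∧ F.Hom.AutSIsSylow p P

/-- Axiom I restricted to the full subgroup `S` itself:
`Aut_S(S)` is a Sylow `p`-subgroup of `Aut_F(S)`. -/
def AxiomIS (p : ℕ) (F : FusionSystem S) : Prop :=
  F.Hom.AutSIsSylow p ⊤

/-- Axiom II of saturation (the extension axiom): every morphism `φ : P → S` of `F`
whose image is fully centralized extends to a morphism of `F` defined on `N_φ`. -/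
def AxiomII (F : FusionSystem S) : Prop :=
  ∀ (P : Subgroup S) (φ : P →* S), φ ∈ F.Hom P ⊤ →
    F.Hom.FullyCentralized φ.range →
    ∃ φbar ∈ F.Hom (Nphi P φ) ⊤,
      ∀ (u : S) (hu : u ∈ P) (hu' : u ∈ Nphi P φ), φbar ⟨u, hu'⟩ = φ ⟨u, hu⟩

/-- A fusion system is saturated if it satisfies Axioms I and II. -/
def Saturated (p : ℕ) (F : FusionSystem S) : Prop :=
  F.AxiomI p ∧ F.AxiomII

end FusionSystem

/-- The closure of a collection: the smallest fusion system containing it.  (The morphism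
sets of the closure are the intersections of the morphism sets over all fusion systems
containing the collection.) -/
def closureHom (C : Collection S) : Collection S :=
  fun P Q =>
    {φ | ∀ F : FusionSystem S, (∀ P' Q', C P' Q' ⊆ F.Hom P' Q') → φ ∈ F.Hom P Q}

/-- A level-wise closed collection `C` is saturated at `P ≤ S` if:
(I_P) every fully normalized `Q` conjugate to `P` in `C` is fully centralized and
`Aut_S(Q)` is a Sylow `p`-subgroup of `Aut_C(Q)`; and
(II_P) every `φ ∈ Hom_C(P,S)` with fully centralized image extends to a morphism
`N_φ → S` in the closure of `C`. -/
def SaturatedAt (p : ℕ) (C : Collection S) (P : Subgroup S) : Prop :=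
  (∀ Q : Subgroup S, C.IsConj P Q → C.FullyNormalized Q →
    C.FullyCentralized Q ∧ C.AutSIsSylow p Q) ∧
  (∀ φ ∈ C P ⊤, C.FullyCentralized (MonoidHom.range φ) →
    ∃ φbar ∈ closureHom C (Nphi P φ) ⊤,
      ∀ (u : S) (hu : u ∈ P) (hu' : u ∈ Nphi P φ), φbar ⟨u, hu'⟩ = φ ⟨u, hu⟩)

end Fusion

theorem aux_sylow_conj {p : ℕ} (hp : p.Prime) {G : Type*} [Group G] [Finite G]
    (H K : Subgroup G) (hH : IsPGroup p H) (hKp : IsPGroup p K)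
    (hK : ∃ k, ¬ p ∣ k ∧ Nat.card G = k * Nat.card K) :
    ∃ g : G, ∀ h ∈ H, g * h * g⁻¹ ∈ K := by
  haveI : Fact p.Prime := ⟨hp⟩
  obtain ⟨k, hk, hcard⟩ := hK
  have hind : K.index = k := by
    have h1 := K.index_mul_card
    rw [hcard] at h1
    exact Nat.eq_of_mul_eq_mul_right Nat.card_pos h1
  have hndvd : ¬ p ∣ K.index := hind ▸ hk
  obtain ⟨T, hHT⟩ := hH.exists_le_sylow
  obtain ⟨g, hg⟩ := MulAction.exists_smul_eq G T (hKp.toSylow hndvd)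
  refine ⟨g, fun h hh => ?_⟩
  have h2 : ((g • T : Sylow p G) : Subgroup G) = K := by rw [hg]; rfl
  rw [← h2, Sylow.coe_subgroup_smul]
  have h3 := Subgroup.smul_mem_pointwise_smul h (MulAut.conj g) T (hHT hh)
  simpa using h3

theorem aux_not_sylow {p : ℕ} (hp : p.Prime) {G : Type*} [Group G] [Finite G]
    (K : Subgroup G) (hKp : IsPGroup p K)
    (hK : ¬ ∃ k, ¬ p ∣ k ∧ Nat.card G = k * Nat.card K) :
    ∃ a : G, a ∉ K ∧ (∃ c : ℕ, orderOf a = p ^ c) ∧ ∀ x ∈ K, a * x * a⁻¹ ∈ K := by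
  haveI : Fact p.Prime := ⟨hp⟩
  obtain ⟨T, hKT⟩ := hKp.exists_le_sylow
  have hne : K ≠ T.1 := by
    intro h
    have hnd : ¬ p ∣ K.index := by rw [h]; exact T.not_dvd_index
    exact hK ⟨K.index, hnd, K.index_mul_card.symm⟩
  have hlt : K < T.1 := hKT.lt_of_ne hne
  have hcond : NormalizerCondition ↥T.1 := normalizerCondition_of_isNilpotent
    (h := T.isPGroup'.isNilpotent)
  set K' := K.subgroupOf T.1 with hK'
  have hK'top : K' < ⊤ := by
    rw [lt_top_iff_ne_top]
    intro h
    rw [Subgroup.subgroupOf_eq_top] at h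
    exact hne (le_antisymm hKT h)
  have hltn := hcond K' hK'top
  obtain ⟨a', ha'n, ha'K⟩ := SetLike.exists_of_lt hltn
  refine ⟨a'.1, ?_, ?_, ?_⟩
  · intro h
    exact ha'K (Subgroup.mem_subgroupOf.mpr h)
  · obtain ⟨c, hc⟩ := T.isPGroup' a'
    obtain ⟨j, hj, hord⟩ := (Nat.dvd_prime_pow hp).mp (orderOf_dvd_of_pow_eq_one hc)
    refine ⟨j, ?_⟩
    rw [← hord]
    exact orderOf_injective T.1.subtype T.1.subtype_injective a'
  · intro x hx
    have hxT : x ∈ T.1 := hKT hx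
    have hx' : (⟨x, hxT⟩ : ↥T.1) ∈ K' := Subgroup.mem_subgroupOf.mpr hx
    have := (Subgroup.mem_normalizer_iff.mp ha'n ⟨x, hxT⟩).mp hx'
    exact Subgroup.mem_subgroupOf.mp this
section RSAux
open Subgroup
variable {S : Type*} [Group S]

theorem RS.conjHom_apply (s : S) (P : Subgroup S) (u : P) : conjHom s P u = s * u * s⁻¹ := rfl

namespace FusionSystem
variable (F : FusionSystem S)

theorem incl_mem {P Q : Subgroup S} (h : P ≤ Q) : conjHom 1 P ∈ F.Hom P Q := by
  apply F.conj_mem'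
  intro u hu
  simpa using h hu

theorem comp_mem {P Q R : Subgroup S} {φ : P →* S} {ψ : Q →* S}
    (hφ : φ ∈ F.Hom P Q) (hψ : ψ ∈ F.Hom Q R) {χ : P →* S}
    (hχ : ∀ u : P, χ u = ψ ⟨φ u, F.mapsTo' hφ u⟩) : χ ∈ F.Hom P R := by
  have h := F.comp_mem' hφ hψ
  have e : χ = ψ.comp (φ.codRestrict Q (F.mapsTo' hφ)) := by
    ext u; rw [hχ]; rfl
  rwa [e]

theorem hom_top {P Q : Subgroup S} {φ : P →* S} (h : φ ∈ F.Hom P Q) : φ ∈ F.Hom P ⊤ :=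
  F.comp_mem h (F.incl_mem le_top) (fun u => by simp [conjHom])

theorem exists_inv {P Q : Subgroup S} {φ : P →* S} (hφ : φ ∈ F.Hom P Q) (hr : φ.range = Q) :
    ∃ ψ ∈ F.Hom Q P, ψ.range = P ∧ ∀ (u : P) (h : (φ u : S) ∈ Q), ψ ⟨φ u, h⟩ = u := by
  obtain ⟨ψ₀, hψ₀, hinv⟩ := F.inv_mem' hφ
  have hincl : conjHom 1 Q ∈ F.Hom Q φ.range := F.incl_mem hr.ge
  set ψ : Q →* S := ψ₀.comp ((conjHom 1 Q).codRestrict φ.range (F.mapsTo' hincl)) with hψdef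
  have hψmem : ψ ∈ F.Hom Q P := F.comp_mem hincl hψ₀ (fun v => rfl)
  have happ : ∀ (u : P) (h : (φ u : S) ∈ Q), ψ ⟨φ u, h⟩ = u := by
    intro u h
    have e : ((conjHom 1 Q).codRestrict φ.range (F.mapsTo' hincl)) ⟨φ u, h⟩
        = (⟨φ u, ⟨u, rfl⟩⟩ : φ.range) := Subtype.ext (by simp [conjHom])
    show ψ₀ _ = _
    rw [e, hinv]
  refine ⟨ψ, hψmem, le_antisymm ?_ ?_, happ⟩
  · rintro x ⟨v, rfl⟩
    exact F.mapsTo' hψmem v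
  · intro u hu
    refine ⟨⟨φ ⟨u, hu⟩, F.mapsTo' hφ _⟩, ?_⟩
    rw [happ]
  
theorem isConj_refl (P : Subgroup S) : F.Hom.IsConj P P :=
  ⟨conjHom 1 P, F.incl_mem le_rfl, by
    have : conjHom 1 P = P.subtype := by ext u; simp [conjHom]
    rw [this, Subgroup.range_subtype]⟩

theorem isConj_symm {P Q : Subgroup S} (h : F.Hom.IsConj P Q) : F.Hom.IsConj Q P := by
  obtain ⟨φ, hφ, hr⟩ := h
  obtain ⟨ψ, hψ, hrψ, _⟩ := F.exists_inv hφ hr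
  exact ⟨ψ, hψ, hrψ⟩

theorem isConj_trans {P Q R : Subgroup S} (h1 : F.Hom.IsConj P Q) (h2 : F.Hom.IsConj Q R) :
    F.Hom.IsConj P R := by
  obtain ⟨φ, hφ, hrφ⟩ := h1; obtain ⟨ψ, hψ, hrψ⟩ := h2
  refine ⟨ψ.comp (φ.codRestrict Q (F.mapsTo' hφ)), F.comp_mem' hφ hψ, le_antisymm ?_ ?_⟩
  · rintro x ⟨u, rfl⟩
    exact hrψ ▸ ⟨_, rfl⟩
  · intro r hr
    obtain ⟨v, rfl⟩ : r ∈ ψ.range := hrψ.symm ▸ hr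
    obtain ⟨u, hu⟩ : (v : S) ∈ φ.range := hrφ.symm ▸ v.2
    exact ⟨u, by simp only [MonoidHom.comp_apply]; congr 1; exact Subtype.ext hu⟩

/-- The isomorphism `P ≃* Q` induced by a morphism of `F` with range `Q`. -/
noncomputable def equivOfHom {P Q : Subgroup S} {φ : P →* S} (hφ : φ ∈ F.Hom P Q)
    (hr : φ.range = Q) : ↥P ≃* ↥Q :=
  MulEquiv.ofBijective (φ.codRestrict Q (F.mapsTo' hφ))
    ⟨fun a b hab => F.injective' hφ (congrArg Subtype.val hab),
     fun v => by
      obtain ⟨u, hu⟩ : (v : S) ∈ φ.range := hr.symm ▸ v.2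
      exact ⟨u, Subtype.ext hu⟩⟩

theorem coe_equivOfHom {P Q : Subgroup S} {φ : P →* S} (hφ : φ ∈ F.Hom P Q)
    (hr : φ.range = Q) (u : P) : (F.equivOfHom hφ hr u : S) = φ u := rfl

theorem card_eq_of_isConj {P Q : Subgroup S} (h : F.Hom.IsConj P Q) :
    Nat.card ↥P = Nat.card ↥Q := by
  obtain ⟨φ, hφ, hr⟩ := h
  exact Nat.card_congr (F.equivOfHom hφ hr).toEquiv

theorem range_subtype_comp_aut [Finite S] (P : Subgroup S) (g : MulAut ↥P) :
    (P.subtype.comp g.toMonoidHom).range = P := by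
  apply le_antisymm
  · rintro x ⟨u, rfl⟩
    exact (g u).2
  · intro u hu
    exact ⟨g⁻¹ ⟨u, hu⟩, by simp⟩

end FusionSystem
end RSAux
section RSAux2
open Subgroup
variable {S : Type*} [Group S] [Finite S]

namespace FusionSystem
variable (F : FusionSystem S)

/-- The group `Aut_F(P)` as a subgroup of `MulAut P`. -/
def FAut (P : Subgroup S) : Subgroup (MulAut ↥P) where
  carrier := {g | P.subtype.comp g.toMonoidHom ∈ F.Hom P P}
  one_mem' := by
    have e : P.subtype.comp (1 : MulAut ↥P).toMonoidHom = conjHom 1 P := by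
      ext u; simp [conjHom]
    show P.subtype.comp (1 : MulAut ↥P).toMonoidHom ∈ F.Hom P P
    rw [e]; exact F.incl_mem le_rfl
  mul_mem' := by
    intro g h hg hh
    exact F.comp_mem hh hg (fun u => rfl)
  inv_mem' := by
    intro g hg
    obtain ⟨ψ, hψ, hrψ, happ⟩ := F.exists_inv hg (range_subtype_comp_aut P g)
    have e : P.subtype.comp (g⁻¹ : MulAut ↥P).toMonoidHom = ψ := by
      ext v
      have h1 : (P.subtype.comp g.toMonoidHom) (g⁻¹ v) = (v : S) := by simp
      have := happ (g⁻¹ v) (h1 ▸ v.2)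
      calc (P.subtype.comp (g⁻¹ : MulAut ↥P).toMonoidHom) v = (g⁻¹ v : S) := rfl
        _ = (ψ ⟨(P.subtype.comp g.toMonoidHom) (g⁻¹ v), _⟩ : S) := by rw [this]
        _ = ψ v := by congr 1; exact Subtype.ext h1
    show P.subtype.comp (g⁻¹ : MulAut ↥P).toMonoidHom ∈ F.Hom P P
    rw [e]; exact hψ

theorem mem_FAut {P : Subgroup S} {g : MulAut ↥P} :
    g ∈ F.FAut P ↔ P.subtype.comp g.toMonoidHom ∈ F.Hom P P := Iff.rfl

theorem card_hom_eq_card_FAut (P : Subgroup S) :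
    Nat.card (F.Hom P P) = Nat.card (F.FAut P) := by
  have himg : F.Hom P P = (fun g : MulAut ↥P => P.subtype.comp g.toMonoidHom) '' (F.FAut P) := by
    apply Set.eq_of_subset_of_subset
    · intro φ hφ
      have hbij : Function.Bijective (φ.codRestrict P (F.mapsTo' hφ)) := by
        rw [Finite.injective_iff_bijective.symm]
        exact fun a b hab => F.injective' hφ (congrArg Subtype.val hab)
      refine ⟨MulEquiv.ofBijective _ hbij, ?_, by ext u; rfl⟩
      show P.subtype.comp _ ∈ F.Hom P P
      have : P.subtype.comp (MulEquiv.ofBijective _ hbij).toMonoidHom = φ := by ext u; rfl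
      rw [this]; exact hφ
    · rintro _ ⟨g, hg, rfl⟩
      exact hg
  rw [himg]
  apply Nat.card_image_of_injective
  intro g g' h
  ext u
  exact DFunLike.congr_fun h u

/-- `Aut_S(P)` as a subgroup of `MulAut P`. -/
def KS (P : Subgroup S) : Subgroup (MulAut ↥P) := P.normalizerMonoidHom.range

theorem KS_le_FAut (P : Subgroup S) : KS P ≤ F.FAut P := by
  rintro _ ⟨x, rfl⟩
  show P.subtype.comp _ ∈ F.Hom P P
  have e : P.subtype.comp (P.normalizerMonoidHom x).toMonoidHom = conjHom (x : S) P := by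
    ext u; rfl
  rw [e]
  exact F.conj_mem' P P x (fun u hu => (Subgroup.mem_normalizer_iff.mp x.2 u).mp hu)

theorem autSSet_eq_image (P : Subgroup S) :
    autSSet P = (fun g : MulAut ↥P => P.subtype.comp g.toMonoidHom) '' (KS P) := by
  apply Set.eq_of_subset_of_subset
  · rintro _ ⟨s, hs, rfl⟩
    refine ⟨P.normalizerMonoidHom ⟨s, hs⟩, ⟨⟨s, hs⟩, rfl⟩, ?_⟩
    ext u; rfl
  · rintro _ ⟨_, ⟨x, rfl⟩, rfl⟩
    exact ⟨x, x.2, by ext u; rfl⟩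

theorem card_autSSet_eq_card_KS (P : Subgroup S) :
    Nat.card (autSSet P) = Nat.card (KS P) := by
  rw [autSSet_eq_image]
  apply Nat.card_image_of_injective
  intro g g' h
  ext u
  exact DFunLike.congr_fun h u

theorem centralizer_le_normalizer' (P : Subgroup S) :
    Subgroup.centralizer (P : Set S) ≤ (Subgroup.normalizer (P : Set S)) := by
  intro x hx
  rw [Subgroup.mem_normalizer_iff]
  intro u
  constructor
  · intro hu
    have := (Subgroup.mem_centralizer_iff.mp hx) u hu
    have e : x * u * x⁻¹ = u := by rw [← this]; group
    rwa [e]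
  · intro hu
    have hc := (Subgroup.mem_centralizer_iff.mp hx) _ hu
    have e : u = x * u * x⁻¹ := by
      have h2 : x * u = (x * u * x⁻¹) * x := by group
      have h4 : x * u = x * (x * u * x⁻¹) := h2.trans hc
      exact mul_left_cancel h4
    rw [e]; exact hu

theorem card_KS_mul_card_centralizer (P : Subgroup S) :
    Nat.card (KS P) * Nat.card (Subgroup.centralizer (P : Set S)) = Nat.card (Subgroup.normalizer (P : Set S)) := by
  have h1 := Subgroup.card_eq_card_quotient_mul_card_subgroup (P.normalizerMonoidHom.ker)
  have h2 : Nat.card (↥(Subgroup.normalizer (P : Set S)) ⧸ P.normalizerMonoidHom.ker) = Nat.card (KS P) :=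
    Nat.card_congr (QuotientGroup.quotientKerEquivRange P.normalizerMonoidHom).toEquiv
  have h3 : Nat.card P.normalizerMonoidHom.ker
      = Nat.card (Subgroup.centralizer (P : Set S)) := by
    rw [Subgroup.normalizerMonoidHom_ker]
    exact Nat.card_congr (Subgroup.subgroupOfEquivOfLe (centralizer_le_normalizer' P)).toEquiv
  rw [h1, h2, h3]

end FusionSystem
end RSAux2
section RSAux3
open Subgroup
variable {S : Type*} [Group S] [Finite S]

/-- Conjugation of automorphism groups by an isomorphism. -/
def mulAutCongr {M N : Type*} [Group M] [Group N] (e : M ≃* N) : MulAut M ≃* MulAut N where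
  toFun g := (e.symm.trans g).trans e
  invFun g := (e.trans g).trans e.symm
  left_inv g := by ext x; simp
  right_inv g := by ext x; simp
  map_mul' g h := by ext x; simp

theorem mulAutCongr_apply {M N : Type*} [Group M] [Group N] (e : M ≃* N) (g : MulAut M)
    (x : M) : mulAutCongr e g (e x) = e (g x) := by
  simp [mulAutCongr]

namespace FusionSystem
variable (F : FusionSystem S)

theorem mulAutCongr_mem_FAut {P Q : Subgroup S} {φ : P →* S} (hφ : φ ∈ F.Hom P Q)
    (hr : φ.range = Q) {g : MulAut ↥P} (hg : g ∈ F.FAut P) :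
    mulAutCongr (F.equivOfHom hφ hr) g ∈ F.FAut Q := by
  set e := F.equivOfHom hφ hr with he
  obtain ⟨ψ, hψ, hrψ, happ⟩ := F.exists_inv hφ hr
  have hψval : ∀ v : Q, ψ v = ((e.symm v : ↥P) : S) := by
    intro v
    have h1 : φ (e.symm v) = (v : S) := by
      have := F.coe_equivOfHom hφ hr (e.symm v)
      rw [MulEquiv.apply_symm_apply] at this
      exact this.symm
    have h2 : (⟨φ (e.symm v), F.mapsTo' hφ _⟩ : ↥Q) = v := Subtype.ext h1
    calc ψ v = ψ ⟨φ (e.symm v), F.mapsTo' hφ _⟩ := by rw [h2]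
      _ = ((e.symm v : ↥P) : S) := by rw [happ]
  -- step 1 : χ' := subtype ∘ g ∘ e.symm ∈ Hom Q P
  have hχ' : P.subtype.comp (g.toMonoidHom.comp e.symm.toMonoidHom) ∈ F.Hom Q P := by
    refine F.comp_mem hψ hg ?_
    intro v
    show ((g (e.symm v)) : S) = ((g ⟨ψ v, _⟩) : S)
    congr 1
    exact congrArg g (Subtype.ext (hψval v).symm)
  -- step 2 : compose with φ
  refine F.comp_mem hχ' hφ ?_
  intro v
  show ((e (g (e.symm v))) : S) = φ ⟨(g (e.symm v) : S), _⟩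
  rw [F.coe_equivOfHom hφ hr]

theorem card_FAut_eq_of_isConj {P Q : Subgroup S} (h : F.Hom.IsConj P Q) :
    Nat.card (F.FAut P) = Nat.card (F.FAut Q) := by
  have key : ∀ P Q : Subgroup S, F.Hom.IsConj P Q →
      Nat.card (F.FAut P) ≤ Nat.card (F.FAut Q) := by
    intro P Q hPQ
    obtain ⟨φ, hφ, hr⟩ := hPQ
    have hinj : Function.Injective
        (fun g : ↥(F.FAut P) => (⟨mulAutCongr (F.equivOfHom hφ hr) g.1,
          F.mulAutCongr_mem_FAut hφ hr g.2⟩ : ↥(F.FAut Q))) := by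
      intro a b hab
      have := congrArg Subtype.val hab
      exact Subtype.ext ((mulAutCongr (F.equivOfHom hφ hr)).injective this)
    exact Nat.card_le_card_of_injective _ hinj
  exact le_antisymm (key P Q h) (key Q P (F.isConj_symm h))

theorem P_le_nphi {P : Subgroup S} (φ : P →* S) : P ≤ Nphi P φ := by
  intro u hu
  refine ⟨Subgroup.le_normalizer hu, φ ⟨u, hu⟩, Subgroup.le_normalizer (H := φ.range) ⟨⟨u, hu⟩, rfl⟩, ?_⟩
  intro a v ha hv hveq
  have e : (⟨v, hv⟩ : P) = ⟨u, hu⟩ * ⟨a, ha⟩ * ⟨u, hu⟩⁻¹ := Subtype.ext hveq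
  rw [e, map_mul, map_mul, map_inv]

theorem nphi_le_normalizer {P : Subgroup S} (φ : P →* S) : Nphi P φ ≤ (Subgroup.normalizer (P : Set S)) :=
  fun _ hx => hx.1

/-- The workhorse consequence of Axiom II: an extension to the normalizer and its
basic mapping properties. -/
theorem ext_lemma (hII : F.AxiomII) {P Q : Subgroup S} {φ : P →* S}
    (hφ : φ ∈ F.Hom P ⊤) (hr : φ.range = Q) (hQc : F.Hom.FullyCentralized Q) :
    ∃ φbar ∈ F.Hom (Nphi P φ) ⊤,
      (∀ (u : S) (hu : u ∈ P) (hu' : u ∈ Nphi P φ), φbar ⟨u, hu'⟩ = φ ⟨u, hu⟩) ∧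
      Function.Injective φbar ∧
      (∀ x : ↥(Nphi P φ), φbar x ∈ (Subgroup.normalizer (Q : Set S))) ∧
      (∀ x : ↥(Nphi P φ), (x : S) ∈ Subgroup.centralizer (P : Set S) →
        φbar x ∈ Subgroup.centralizer (Q : Set S)) ∧
      (∀ x : ↥(Nphi P φ), φbar x ∈ Subgroup.centralizer (Q : Set S) →
        (x : S) ∈ Subgroup.centralizer (P : Set S)) := by
  have hQc' : F.Hom.FullyCentralized φ.range := hr.symm ▸ hQc
  obtain ⟨φbar, hmem, hagree⟩ := hII P φ hφ hQc'
  have hinj : Function.Injective φbar := F.injective' hmem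
  have hnormP : ∀ (x : ↥(Nphi P φ)) (u : S), u ∈ P → (x : S) * u * (x : S)⁻¹ ∈ P := by
    intro x u hu
    exact (Subgroup.mem_normalizer_iff.mp x.2.1 u).mp hu
  have hconj : ∀ (x : ↥(Nphi P φ)) (u : S) (hu : u ∈ P),
      φbar x * φ ⟨u, hu⟩ * (φbar x)⁻¹ = φ ⟨(x : S) * u * (x : S)⁻¹, hnormP x u hu⟩ := by
    intro x u hu
    have huN : u ∈ Nphi P φ := P_le_nphi φ hu
    have hwN : (x : S) * u * (x : S)⁻¹ ∈ Nphi P φ :=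
      mul_mem (mul_mem x.2 huN) (inv_mem x.2)
    have e1 : (⟨(x : S) * u * (x : S)⁻¹, hwN⟩ : ↥(Nphi P φ))
        = x * ⟨u, huN⟩ * x⁻¹ := Subtype.ext rfl
    calc φbar x * φ ⟨u, hu⟩ * (φbar x)⁻¹
        = φbar x * φbar ⟨u, huN⟩ * (φbar x)⁻¹ := by rw [hagree u hu huN]
      _ = φbar (x * ⟨u, huN⟩ * x⁻¹) := by rw [map_mul, map_mul, map_inv]
      _ = φbar ⟨(x : S) * u * (x : S)⁻¹, hwN⟩ := by rw [e1]
      _ = φ ⟨(x : S) * u * (x : S)⁻¹, hnormP x u hu⟩ := hagree _ _ _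
  have hmemQ : ∀ u : P, φ u ∈ Q := by
    intro u; rw [← hr]; exact ⟨u, rfl⟩
  have hsurjQ : ∀ q : S, q ∈ Q → ∃ u : P, φ u = q := by
    intro q hq
    have : q ∈ φ.range := hr.symm ▸ hq
    exact this
  refine ⟨φbar, hmem, hagree, hinj, ?_, ?_, ?_⟩
  · intro x
    apply Subgroup.mem_normalizer_fintype
    intro q hq
    obtain ⟨u, rfl⟩ := hsurjQ q hq
    rw [hconj x u u.2]
    exact hmemQ _
  · intro x hx
    rw [Subgroup.mem_centralizer_iff]
    intro q hq
    obtain ⟨u, rfl⟩ := hsurjQ q hq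
    have hxu : (x : S) * (u : S) * (x : S)⁻¹ = (u : S) := by
      have := Subgroup.mem_centralizer_iff.mp hx (u : S) u.2
      have h4 : (x:S) * (u:S) = (u:S) * (x:S) := this.symm
      calc (x : S) * (u : S) * (x : S)⁻¹ = (u:S) * ((x:S) * (x:S)⁻¹) := by rw [h4]; group
        _ = (u : S) := by group
    have h5 := hconj x (u : S) u.2
    have e : (⟨(x : S) * (u : S) * (x : S)⁻¹, hnormP x _ u.2⟩ : P) = u := Subtype.ext hxu
    rw [e] at h5
    have h6 : φbar x * φ u = φ u * φbar x := by
      have := h5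
      rw [mul_inv_eq_iff_eq_mul] at this
      exact this
    exact h6.symm
  · intro x hx
    rw [Subgroup.mem_centralizer_iff]
    intro u hu
    have h5 := hconj x u hu
    have hcomm := Subgroup.mem_centralizer_iff.mp hx (φ ⟨u, hu⟩) (hmemQ ⟨u, hu⟩)
    have h6 : φbar x * φ ⟨u, hu⟩ * (φbar x)⁻¹ = φ ⟨u, hu⟩ := by
      rw [← hcomm]; group
    rw [h6] at h5
    have h7 : (⟨u, hu⟩ : P) = ⟨(x:S) * u * (x:S)⁻¹, hnormP x u hu⟩ := F.injective' hφ h5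
    have h8 : u = (x:S) * u * (x:S)⁻¹ := congrArg Subtype.val h7
    calc u * (x : S) = ((x:S) * u * (x:S)⁻¹) * (x:S) := by rw [← h8]
      _ = (x : S) * u := by group

end FusionSystem
end RSAux3
section RSAux4
open Subgroup
variable {S : Type*} [Group S] [Finite S]

namespace FusionSystem
variable (F : FusionSystem S)

theorem autSSet_subset_hom (P : Subgroup S) : autSSet P ⊆ F.Hom P P := by
  rintro _ ⟨s, hs, rfl⟩
  exact F.conj_mem' P P s (fun u hu => (Subgroup.mem_normalizer_iff.mp hs u).mp hu)

theorem card_KS_pPow {p : ℕ} (hp : p.Prime) (hS : IsPGroup p S) (P : Subgroup S) :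
    ∃ n : ℕ, Nat.card (KS P) = p ^ n := by
  haveI : Fact p.Prime := ⟨hp⟩
  obtain ⟨m, hm⟩ := IsPGroup.iff_card.mp hS
  have h1 : Nat.card (KS P) ∣ Nat.card (Subgroup.normalizer (P : Set S)) :=
    ⟨Nat.card (Subgroup.centralizer (P : Set S)), (card_KS_mul_card_centralizer P).symm⟩
  have h2 : Nat.card (Subgroup.normalizer (P : Set S)) ∣ Nat.card S := Subgroup.card_subgroup_dvd_card _
  have h3 : Nat.card (KS P) ∣ p ^ m := hm ▸ h1.trans h2
  obtain ⟨n, _, hn⟩ := (Nat.dvd_prime_pow hp).mp h3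
  exact ⟨n, hn⟩

theorem autSIsSylow_iff_card {p : ℕ} (hp : p.Prime) (hS : IsPGroup p S) (P : Subgroup S) :
    F.Hom.AutSIsSylow p P ↔
      ∃ k : ℕ, ¬ p ∣ k ∧ Nat.card (F.FAut P) = k * Nat.card (KS P) := by
  constructor
  · rintro ⟨-, -, k, hk, hcard⟩
    exact ⟨k, hk, by
      rw [← F.card_hom_eq_card_FAut, ← card_autSSet_eq_card_KS]; exact hcard⟩
  · rintro ⟨k, hk, hcard⟩
    refine ⟨F.autSSet_subset_hom P, ?_, k, hk, ?_⟩
    · obtain ⟨n, hn⟩ := card_KS_pPow hp hS P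
      exact ⟨n, by rw [card_autSSet_eq_card_KS]; exact hn⟩
    · rw [F.card_hom_eq_card_FAut, card_autSSet_eq_card_KS]; exact hcard

/-- Adjust an isomorphism `P → Q` by a Sylow conjugation at `Q` so that a prescribed
`p`-subgroup `B` of `Aut_F(P)` is carried into `Aut_S(Q)`. -/
theorem exists_adjusted_iso {p : ℕ} (hp : p.Prime) (hS : IsPGroup p S) {P Q : Subgroup S}
    (hPQ : F.Hom.IsConj P Q)
    (hQa : ∃ k : ℕ, ¬ p ∣ k ∧ Nat.card (F.FAut Q) = k * Nat.card (KS Q))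
    (B : Subgroup (MulAut ↥P)) (hB : ∃ n : ℕ, Nat.card B = p ^ n) (hBF : B ≤ F.FAut P) :
    ∃ (φ : P →* S) (hφ : φ ∈ F.Hom P Q) (hr : φ.range = Q),
      ∀ g ∈ B, mulAutCongr (F.equivOfHom hφ hr) g ∈ KS Q := by
  haveI : Fact p.Prime := ⟨hp⟩
  obtain ⟨φ₀, hφ₀, hr₀⟩ := hPQ
  set e₀ := F.equivOfHom hφ₀ hr₀ with he₀
  set A : Subgroup (MulAut ↥Q) := Subgroup.map (mulAutCongr e₀).toMonoidHom B with hA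
  have hAF : A ≤ F.FAut Q := by
    rintro _ ⟨g, hg, rfl⟩
    exact F.mulAutCongr_mem_FAut hφ₀ hr₀ (hBF hg)
  have hKSF : KS Q ≤ F.FAut Q := F.KS_le_FAut Q
  have hcardA : Nat.card A = Nat.card B :=
    (Nat.card_congr (Subgroup.equivMapOfInjective B _ (mulAutCongr e₀).injective).toEquiv).symm
  -- Sylow conjugation inside FAut Q
  have hpg1 : IsPGroup p ↥(A.subgroupOf (F.FAut Q)) := by
    apply IsPGroup.of_card (p := p) (n := Classical.choose hB)
    rw [Nat.card_congr (Subgroup.subgroupOfEquivOfLe hAF).toEquiv, hcardA]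
    exact Classical.choose_spec hB
  have hpg2 : IsPGroup p ↥((KS Q).subgroupOf (F.FAut Q)) := by
    obtain ⟨n, hn⟩ := card_KS_pPow hp hS Q
    apply IsPGroup.of_card (p := p) (n := n)
    rw [Nat.card_congr (Subgroup.subgroupOfEquivOfLe hKSF).toEquiv]
    exact hn
  have hidx : ∃ k : ℕ, ¬ p ∣ k ∧ Nat.card ↥(F.FAut Q)
      = k * Nat.card ((KS Q).subgroupOf (F.FAut Q)) := by
    obtain ⟨k, hk, hcard⟩ := hQa
    exact ⟨k, hk, by
      rw [Nat.card_congr (Subgroup.subgroupOfEquivOfLe hKSF).toEquiv]; exact hcard⟩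
  obtain ⟨χ, hχ⟩ := aux_sylow_conj hp (G := ↥(F.FAut Q)) (A.subgroupOf (F.FAut Q))
      ((KS Q).subgroupOf (F.FAut Q)) hpg1 hpg2 hidx
  · -- assemble the adjusted morphism
    have hχhom : Q.subtype.comp (χ : MulAut ↥Q).toMonoidHom ∈ F.Hom Q Q := χ.2
    set φ : P →* S := (Q.subtype.comp (χ : MulAut ↥Q).toMonoidHom).comp
      (φ₀.codRestrict Q (F.mapsTo' hφ₀)) with hφdef
    have hφ : φ ∈ F.Hom P Q := F.comp_mem' hφ₀ hχhom
    have hφval : ∀ u : P, φ u = ((χ : MulAut ↥Q) (e₀ u) : S) := fun u => rfl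
    have hr : φ.range = Q := by
      apply le_antisymm
      · rintro _ ⟨u, rfl⟩
        exact F.mapsTo' hφ u
      · intro q hq
        refine ⟨e₀.symm ((χ : MulAut ↥Q)⁻¹ ⟨q, hq⟩), ?_⟩
        rw [hφval, MulEquiv.apply_symm_apply]
        simp
    refine ⟨φ, hφ, hr, ?_⟩
    intro g hg
    set e := F.equivOfHom hφ hr with he
    have heval : ∀ u : P, e u = (χ : MulAut ↥Q) (e₀ u) := by
      intro u
      exact Subtype.ext (hφval u)
    have hgA : mulAutCongr e₀ g ∈ A := ⟨g, hg, rfl⟩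
    have hconj := hχ ⟨mulAutCongr e₀ g, hAF hgA⟩ (Subgroup.mem_subgroupOf.mpr hgA)
    have hKSmem : ((χ * ⟨mulAutCongr e₀ g, hAF hgA⟩ * χ⁻¹ : ↥(F.FAut Q)) : MulAut ↥Q)
        ∈ KS Q := Subgroup.mem_subgroupOf.mp hconj
    have hval : ((χ * ⟨mulAutCongr e₀ g, hAF hgA⟩ * χ⁻¹ : ↥(F.FAut Q)) : MulAut ↥Q)
        = (χ : MulAut ↥Q) * mulAutCongr e₀ g * (χ : MulAut ↥Q)⁻¹ := rfl
    have hfinal : mulAutCongr e g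
        = (χ : MulAut ↥Q) * mulAutCongr e₀ g * (χ : MulAut ↥Q)⁻¹ := by
      apply MulEquiv.ext
      intro v
      set u := e.symm v with hu
      have hv : e u = v := MulEquiv.apply_symm_apply e v
      rw [← hv]
      have h1 : mulAutCongr e g (e u) = e (g u) := mulAutCongr_apply e g u
      rw [h1, heval, heval]
      show (χ : MulAut ↥Q) (e₀ (g u))
        = ((χ : MulAut ↥Q) * mulAutCongr e₀ g * (χ : MulAut ↥Q)⁻¹) ((χ : MulAut ↥Q) (e₀ u))
      rw [MulAut.mul_apply, MulAut.mul_apply]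
      have h2 : ((χ : MulAut ↥Q)⁻¹) ((χ : MulAut ↥Q) (e₀ u)) = e₀ u := by simp
      rw [h2, mulAutCongr_apply]
    rw [hfinal]
    rw [hval] at hKSmem
    exact hKSmem

end FusionSystem
end RSAux4
section RSAux5
open Subgroup
variable {S : Type*} [Group S] [Finite S]

namespace FusionSystem
variable (F : FusionSystem S)

theorem transport {p : ℕ} (hp : p.Prime) (hS : IsPGroup p S) (hII : F.AxiomII)
    {P Q : Subgroup S} (hPQ : F.Hom.IsConj P Q) (hQc : F.Hom.FullyCentralized Q)
    (hQa : ∃ k : ℕ, ¬ p ∣ k ∧ Nat.card (F.FAut Q) = k * Nat.card (KS Q))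
    (hPn : F.Hom.FullyNormalized P) :
    Nat.card (Subgroup.centralizer (P : Set S)) = Nat.card (Subgroup.centralizer (Q : Set S)) ∧
      Nat.card (Subgroup.normalizer (P : Set S)) = Nat.card (Subgroup.normalizer (Q : Set S)) := by
  obtain ⟨φ, hφ, hr, hKSmap⟩ := F.exists_adjusted_iso hp hS hPQ hQa (KS P)
    (card_KS_pPow hp hS P) (F.KS_le_FAut P)
  set e := F.equivOfHom hφ hr with he
  -- N_φ is the full normalizer
  have hNphi : Nphi P φ = (Subgroup.normalizer (P : Set S)) := by
    apply le_antisymm (nphi_le_normalizer φ)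
    intro x hx
    set cx : MulAut ↥P := P.normalizerMonoidHom ⟨x, hx⟩ with hcx
    have hcxKS : cx ∈ KS P := ⟨⟨x, hx⟩, rfl⟩
    obtain ⟨y, hy⟩ := hKSmap cx hcxKS
    refine ⟨hx, (y : S), ?_, ?_⟩
    · rw [hr]; exact y.2
    · intro u v hu hv hveq
      have e1 : (⟨v, hv⟩ : ↥P) = cx ⟨u, hu⟩ := Subtype.ext hveq
      have e2 : φ ⟨v, hv⟩ = ((e (cx ⟨u, hu⟩)) : S) := by
        rw [e1]; rfl
      have e3 : e (cx ⟨u, hu⟩) = mulAutCongr e cx (e ⟨u, hu⟩) := (mulAutCongr_apply e cx _).symm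
      have e4 : mulAutCongr e cx (e ⟨u, hu⟩) = Q.normalizerMonoidHom y (e ⟨u, hu⟩) := by
        rw [hy]
      have e5 : (Q.normalizerMonoidHom y (e ⟨u, hu⟩) : S)
          = (y : S) * ((e ⟨u, hu⟩) : S) * (y : S)⁻¹ := rfl
      rw [e2, e3, e4, e5]
      rfl
  -- extension to the normalizer
  obtain ⟨φbar, hbarmem, hagree, hbarinj, hnorm, hcentto, hcentfrom⟩ :=
    F.ext_lemma hII (F.hom_top hφ) hr hQc
  have cardN : Nat.card ↥(Nphi P φ) = Nat.card (Subgroup.normalizer (P : Set S)) := by rw [hNphi]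
  -- injection of normalizers
  set f : ↥(Nphi P φ) → ↥(Subgroup.normalizer (Q : Set S)) := fun x => ⟨φbar x, hnorm x⟩ with hf
  have hfinj : Function.Injective f := by
    intro a b hab
    exact hbarinj (congrArg Subtype.val hab)
  have hle1 : Nat.card (Subgroup.normalizer (P : Set S)) ≤ Nat.card (Subgroup.normalizer (Q : Set S)) := by
    rw [← cardN]
    exact Nat.card_le_card_of_injective f hfinj
  have hle2 : Nat.card (Subgroup.normalizer (Q : Set S)) ≤ Nat.card (Subgroup.normalizer (P : Set S)) := hPn Q hPQ
  have hNeq : Nat.card (Subgroup.normalizer (P : Set S)) = Nat.card (Subgroup.normalizer (Q : Set S)) := le_antisymm hle1 hle2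
  refine ⟨?_, hNeq⟩
  -- bijectivity of f
  have hfbij : Function.Bijective f := by
    rw [Nat.bijective_iff_injective_and_card]
    exact ⟨hfinj, by rw [cardN, hNeq]⟩
  -- centralizer correspondence
  have hCle : Subgroup.centralizer (P : Set S) ≤ Nphi P φ := by
    rw [hNphi]; exact centralizer_le_normalizer' P
  set g : ↥(Subgroup.centralizer (P : Set S)) → ↥(Subgroup.centralizer (Q : Set S)) :=
    fun c => ⟨φbar ⟨(c : S), hCle c.2⟩, hcentto _ c.2⟩ with hg
  have hginj : Function.Injective g := by
    intro a b hab
    have h2 := hbarinj (congrArg Subtype.val hab)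
    exact Subtype.ext (Subtype.mk_eq_mk.mp h2)
  have hgsurj : Function.Surjective g := by
    intro d
    have hdN : (d : S) ∈ (Subgroup.normalizer (Q : Set S)) := centralizer_le_normalizer' Q d.2
    obtain ⟨x, hx⟩ := hfbij.2 ⟨(d : S), hdN⟩
    have hxval : φbar x = (d : S) := congrArg Subtype.val hx
    have hxc : (x : S) ∈ Subgroup.centralizer (P : Set S) :=
      hcentfrom x (hxval ▸ d.2)
    refine ⟨⟨(x : S), hxc⟩, ?_⟩
    apply Subtype.ext
    show φbar ⟨(x : S), hCle hxc⟩ = (d : S)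
    have : (⟨(x : S), hCle hxc⟩ : ↥(Nphi P φ)) = x := Subtype.ext rfl
    rw [this, hxval]
  exact Nat.card_eq_of_bijective g ⟨hginj, hgsurj⟩

theorem card_KS_eq_of_transport {P Q : Subgroup S}
    (hC : Nat.card (Subgroup.centralizer (P : Set S))
      = Nat.card (Subgroup.centralizer (Q : Set S)))
    (hN : Nat.card (Subgroup.normalizer (P : Set S)) = Nat.card (Subgroup.normalizer (Q : Set S))) :
    Nat.card (KS P) = Nat.card (KS Q) := by
  have h1 := card_KS_mul_card_centralizer (S := S) P
  have h2 := card_KS_mul_card_centralizer (S := S) Q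
  rw [hC, hN] at h1
  rw [← h2] at h1
  have hpos : 0 < Nat.card (Subgroup.centralizer (Q : Set S)) := Nat.card_pos
  exact Nat.eq_of_mul_eq_mul_right hpos h1

end FusionSystem
end RSAux5
section RSAux6
open Subgroup
variable {S : Type*} [Group S] [Finite S]

namespace FusionSystem
variable (F : FusionSystem S)

theorem top_case {p : ℕ} (hIS : F.AxiomIS p) {P : Subgroup S} (hP : P = ⊤) :
    ∃ Q : Subgroup S, F.Hom.IsConj P Q ∧ F.Hom.FullyCentralized Q ∧ F.Hom.AutSIsSylow p Q := by
  subst hP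
  refine ⟨⊤, F.isConj_refl ⊤, ?_, hIS⟩
  intro Q hQ
  have hc := F.card_eq_of_isConj hQ
  have hQtop : Q = ⊤ := Subgroup.eq_top_of_card_eq Q (by rw [← hc, Subgroup.card_top])
  rw [hQtop]

theorem exists_fc_fa {p : ℕ} (hp : p.Prime) (hS : IsPGroup p S)
    (hIS : F.AxiomIS p) (hII : F.AxiomII) (P₀ : Subgroup S) :
    ∃ Q : Subgroup S, F.Hom.IsConj P₀ Q ∧ F.Hom.FullyCentralized Q ∧ F.Hom.AutSIsSylow p Q := by
  haveI : Fact p.Prime := ⟨hp⟩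
  suffices h : ∀ (n : ℕ) (P : Subgroup S), Nat.card S - Nat.card ↥P ≤ n →
      ∃ Q : Subgroup S, F.Hom.IsConj P Q ∧ F.Hom.FullyCentralized Q ∧ F.Hom.AutSIsSylow p Q by
    exact h _ P₀ le_rfl
  intro n
  induction n with
  | zero =>
    intro P hle
    apply F.top_case hIS
    have h2 : Nat.card ↥P ≤ Nat.card S := Subgroup.card_le_card_group P
    exact Subgroup.eq_top_of_le_card P (by omega)
  | succ n ih =>
    intro P hle
    by_cases hPtop : P = ⊤
    · exact F.top_case hIS hPtop
    -- pick a fully centralized member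
    have hfc_exists : ∃ R, F.Hom.IsConj P R ∧ F.Hom.FullyCentralized R := by
      have hne : Nonempty {Q : Subgroup S // F.Hom.IsConj P Q} := ⟨⟨P, F.isConj_refl P⟩⟩
      obtain ⟨R₀, hR₀⟩ := Finite.exists_max
        (fun Q : {Q : Subgroup S // F.Hom.IsConj P Q} =>
          Nat.card (Subgroup.centralizer ((Q : Subgroup S) : Set S)))
      refine ⟨R₀, R₀.2, ?_⟩
      intro Q hQ
      exact hR₀ ⟨Q, F.isConj_trans R₀.2 hQ⟩
    have hne2 : Nonempty {Q : Subgroup S // F.Hom.IsConj P Q ∧ F.Hom.FullyCentralized Q} :=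
      ⟨⟨hfc_exists.choose, hfc_exists.choose_spec⟩⟩
    obtain ⟨Rm, hRm⟩ := Finite.exists_max
      (fun Q : {Q : Subgroup S // F.Hom.IsConj P Q ∧ F.Hom.FullyCentralized Q} =>
        Nat.card (KS (Q : Subgroup S)))
    set R := (Rm : Subgroup S) with hRdef
    obtain ⟨hPR, hRc⟩ := Rm.2
    by_cases hfa : F.Hom.AutSIsSylow p R
    · exact ⟨R, hPR, hRc, hfa⟩
    exfalso
    have hcardPR : Nat.card ↥P = Nat.card ↥R := F.card_eq_of_isConj hPR
    have hRneTop : R ≠ ⊤ := by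
      intro h
      apply hPtop
      apply Subgroup.eq_top_of_card_eq
      rw [hcardPR, h, Subgroup.card_top]
    have hRltTop : R < ⊤ := lt_top_iff_ne_top.mpr hRneTop
    have hRcard_lt : Nat.card ↥R < Nat.card S := by
      refine lt_of_le_of_ne (Subgroup.card_le_card_group R) (fun h => hRneTop ?_)
      exact Subgroup.eq_top_of_card_eq R h
    -- extract a p-element of Aut_F(R) normalizing Aut_S(R) but not inside it
    have hKSF : KS R ≤ F.FAut R := F.KS_le_FAut R
    obtain ⟨nks, hnks⟩ := card_KS_pPow hp hS R
    have hKpg : IsPGroup p ((KS R).subgroupOf (F.FAut R)) := by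
      apply IsPGroup.of_card (p := p) (n := nks)
      rw [Nat.card_congr (Subgroup.subgroupOfEquivOfLe hKSF).toEquiv]
      exact hnks
    have hns : ¬ ∃ k : ℕ, ¬ p ∣ k ∧ Nat.card ↥(F.FAut R)
        = k * Nat.card ((KS R).subgroupOf (F.FAut R)) := by
      rintro ⟨k, hk, hcard⟩
      apply hfa
      apply (F.autSIsSylow_iff_card hp hS R).mpr
      exact ⟨k, hk, by
        rw [← Nat.card_congr (Subgroup.subgroupOfEquivOfLe hKSF).toEquiv]; exact hcard⟩
    obtain ⟨a', ha'notK, ⟨c, hc⟩, ha'conj⟩ :=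
      aux_not_sylow hp ((KS R).subgroupOf (F.FAut R)) hKpg hns
    set a : MulAut ↥R := (a' : MulAut ↥R) with hadef
    have haF : a ∈ F.FAut R := a'.2
    have hanotK : a ∉ KS R := fun h => ha'notK (Subgroup.mem_subgroupOf.mpr h)
    have haord : orderOf a = p ^ c := by
      rw [← hc]
      exact orderOf_injective (F.FAut R).subtype (F.FAut R).subtype_injective a'
    have haconj : ∀ k ∈ KS R, a * k * a⁻¹ ∈ KS R := by
      intro k hk
      have h1 := ha'conj ⟨k, hKSF hk⟩ (Subgroup.mem_subgroupOf.mpr hk)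
      exact Subgroup.mem_subgroupOf.mp h1
    -- the morphism uα induced by a
    set uα : ↥R →* S := R.subtype.comp a.toMonoidHom with huαdef
    have huαmem : uα ∈ F.Hom R R := haF
    have huαrange : uα.range = R := range_subtype_comp_aut R a
    have huαtop : uα ∈ F.Hom R ⊤ := F.hom_top huαmem
    -- N_{uα} is the full normalizer
    have hNphi : Nphi R uα = (Subgroup.normalizer (R : Set S)) := by
      apply le_antisymm (nphi_le_normalizer uα)
      intro x hx
      set cx : MulAut ↥R := R.normalizerMonoidHom ⟨x, hx⟩ with hcxdef
      obtain ⟨y, hy⟩ := haconj cx ⟨⟨x, hx⟩, rfl⟩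
      refine ⟨hx, (y : S), ?_, ?_⟩
      · rw [huαrange]; exact y.2
      · intro u v hu hv hveq
        have e1 : (⟨v, hv⟩ : ↥R) = cx ⟨u, hu⟩ := Subtype.ext hveq
        have e2 : a (cx ⟨u, hu⟩) = (a * cx * a⁻¹) (a ⟨u, hu⟩) := by
          simp [MulAut.mul_apply]
        have e3 : (a * cx * a⁻¹) (a ⟨u, hu⟩) = R.normalizerMonoidHom y (a ⟨u, hu⟩) := by
          rw [hy]
        show (a (⟨v, hv⟩ : ↥R) : S) = (y : S) * ((a ⟨u, hu⟩ : ↥R) : S) * (y : S)⁻¹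
        rw [e1, e2, e3]
        rfl
    -- extension of uα to the full normalizer
    obtain ⟨φbar, hbarmem, hagree, hbarinj, hnorm, -, -⟩ :=
      F.ext_lemma hII huαtop huαrange hRc
    have hRX : R ≤ (Nphi R uα) := P_le_nphi uα
    have hRltX : R < (Nphi R uα) := by
      have hcond : NormalizerCondition S :=
        normalizerCondition_of_isNilpotent (h := hS.isNilpotent)
      have h2 := hcond R hRltTop
      rw [← hNphi] at h2
      exact h2
    have hcardRX : Nat.card ↥R < Nat.card ↥(Nphi R uα) := by
      refine lt_of_le_of_ne (Subgroup.card_le_of_le hRltX.le) (fun heq => hRltX.ne ?_)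
      exact Subgroup.eq_of_le_of_card_ge hRltX.le heq.ge
    -- φbar is an F-automorphism of (Nphi R uα)
    have hrange_le : φbar.range ≤ (Nphi R uα) := by
      rintro _ ⟨x, rfl⟩
      have h2 := hnorm x
      show φbar x ∈ Nphi R uα
      rwa [← hNphi] at h2
    have hcard_range : Nat.card ↥(φbar.range) = Nat.card ↥(Nphi R uα) :=
      (Nat.card_congr (MonoidHom.ofInjective hbarinj).toEquiv).symm
    have hrange : φbar.range = (Nphi R uα) :=
      Subgroup.eq_of_le_of_card_ge hrange_le (by rw [hcard_range])
    have hbarXX : φbar ∈ F.Hom (Nphi R uα) (Nphi R uα) := by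
      have h2 := F.target_mem' hbarmem
      rwa [hrange] at h2
    set gX : ↥(Nphi R uα) ≃* ↥(Nphi R uα) := F.equivOfHom hbarXX hrange with hgXdef
    have hgXF : gX ∈ F.FAut (Nphi R uα) := by
      show (Nphi R uα).subtype.comp gX.toMonoidHom ∈ F.Hom (Nphi R uα) (Nphi R uα)
      have h2 : (Nphi R uα).subtype.comp gX.toMonoidHom = φbar := by ext u; rfl
      rw [h2]
      exact hbarXX
    -- restriction of powers of gX to R
    have hres : ∀ u : ↥R, ((gX (Subgroup.inclusion hRX u)) : S) = ((a u : ↥R) : S) := by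
      intro u
      exact hagree (u : S) u.2 (hRX u.2)
    have hresk : ∀ (k : ℕ) (u : ↥R),
        ((gX ^ k) (Subgroup.inclusion hRX u) : S) = (((a ^ k) u : ↥R) : S) := by
      intro k
      induction k with
      | zero => intro u; rfl
      | succ k ihk =>
        intro u
        have h1 : (gX ^ (k+1)) (Subgroup.inclusion hRX u)
            = (gX ^ k) (gX (Subgroup.inclusion hRX u)) := by
          rw [pow_succ]
          rfl
        have h2 : gX (Subgroup.inclusion hRX u) = Subgroup.inclusion hRX (a u) :=
          Subtype.ext (hres u)
        have h3 : ((a ^ (k+1)) u : ↥R) = (a ^ k) (a u) := by rw [pow_succ]; rfl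
        rw [h1, h2, ihk (a u), h3]
    -- extract the p-part of gX
    set m := orderOf gX with hmdef
    have hm0 : m ≠ 0 := (orderOf_pos gX).ne'
    set m' := m / p ^ m.factorization p with hm'def
    have hm'dvd : m' ∣ m := Nat.div_dvd_of_dvd (Nat.ordProj_dvd m p)
    have hm'ndvd : ¬ p ∣ m' := Nat.not_dvd_ordCompl hp hm0
    set β := gX ^ m' with hβdef
    have hβord : orderOf β = p ^ m.factorization p := by
      rw [hβdef, orderOf_pow, ← hmdef, Nat.gcd_eq_right hm'dvd, hm'def]
      exact Nat.div_div_self (Nat.ordProj_dvd m p) hm0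
    have hβmem : β ∈ F.FAut (Nphi R uα) := pow_mem hgXF m'
    set aa := a ^ m' with haadef
    have haanotK : aa ∉ KS R := by
      intro hmem
      have hane : a ≠ 1 := fun h => hanotK (h ▸ (KS R).one_mem)
      have hordne : orderOf a ≠ 1 := fun h => hane (orderOf_eq_one_iff.mp h)
      have hc0 : c ≠ 0 := fun h => hordne (by rw [haord, h, pow_zero])
      have h1lt : 1 < p ^ c := Nat.one_lt_pow hc0 hp.one_lt
      have hcop : Nat.Coprime m' (p ^ c) :=
        Nat.Coprime.pow_right c (Nat.Coprime.symm ((hp.coprime_iff_not_dvd).mpr hm'ndvd))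
      obtain ⟨d, -, hd⟩ := Nat.exists_mul_mod_eq_one_of_coprime hcop h1lt
      have ha_eq : a = aa ^ d := by
        rw [haadef, ← pow_mul]
        have h4 := pow_mod_orderOf a (m' * d)
        rw [haord, hd, pow_one] at h4
        exact h4
      rw [ha_eq] at hanotK
      exact hanotK (pow_mem hmem d)
    have hβres : ∀ u : ↥R, β (Subgroup.inclusion hRX u) = Subgroup.inclusion hRX (aa u) :=
      fun u => Subtype.ext (hresk m' u)
    -- induction hypothesis at level (Nphi R uα)
    have hXle : Nat.card S - Nat.card ↥(Nphi R uα) ≤ n := by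
      have h1 : Nat.card S - Nat.card ↥(Nphi R uα) < Nat.card S - Nat.card ↥R :=
        Nat.sub_lt_sub_left hRcard_lt hcardRX
      omega
    obtain ⟨N', hXN', hN'c, hN'a⟩ := ih (Nphi R uα) hXle
    obtain ⟨ψ, hψ, hψr, hψmap⟩ := F.exists_adjusted_iso hp hS hXN'
      ((F.autSIsSylow_iff_card hp hS N').mp hN'a) (Subgroup.zpowers β)
      ⟨m.factorization p, by rw [Nat.card_zpowers, hβord]⟩
      ((Subgroup.zpowers_le).mpr hβmem)
    set eψ : ↥(Nphi R uα) ≃* ↥N' := F.equivOfHom hψ hψr with heψdef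
    obtain ⟨y, hy⟩ := hψmap β (Subgroup.mem_zpowers β)
    set s : S := (y : S) with hsdef
    have hkey : ∀ x : ↥(Nphi R uα), ψ (β x) = s * ψ x * s⁻¹ := by
      intro x
      have e1 : ψ (β x) = ((eψ (β x)) : S) := rfl
      have e2 : eψ (β x) = mulAutCongr eψ β (eψ x) := (mulAutCongr_apply eψ β x).symm
      have e3 : mulAutCongr eψ β (eψ x) = N'.normalizerMonoidHom y (eψ x) := by rw [hy]
      rw [e1, e2, e3]
      rfl
    -- the conjugated copy R' of R
    set θ : ↥R →* S := ψ.comp (Subgroup.inclusion hRX) with hθdef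
    have hinclmem : conjHom 1 R ∈ F.Hom R (Nphi R uα) := F.incl_mem hRX
    have hθmem : θ ∈ F.Hom R N' := by
      refine F.comp_mem hinclmem hψ ?_
      intro u
      show ψ (Subgroup.inclusion hRX u) = ψ ⟨conjHom 1 R u, _⟩
      congr 1
      exact Subtype.ext (by simp [conjHom])
    set R' := θ.range with hR'def
    have hθR' : θ ∈ F.Hom R R' := F.target_mem' hθmem
    have hconjRR' : F.Hom.IsConj R R' := ⟨θ, hθR', rfl⟩
    -- R' is fully centralized
    have hCX : Subgroup.centralizer (R : Set S) ≤ (Nphi R uα) := by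
      show Subgroup.centralizer (R : Set S) ≤ Nphi R uα
      rw [hNphi]
      exact centralizer_le_normalizer' R
    have hmemC : ∀ cc : ↥(Subgroup.centralizer (R : Set S)),
        ψ ⟨(cc : S), hCX cc.2⟩ ∈ Subgroup.centralizer (R' : Set S) := by
      intro cc
      rw [Subgroup.mem_centralizer_iff]
      rintro _ ⟨u, rfl⟩
      have hcomm : (Subgroup.inclusion hRX u) * (⟨(cc : S), hCX cc.2⟩ : ↥(Nphi R uα))
          = (⟨(cc : S), hCX cc.2⟩ : ↥(Nphi R uα)) * Subgroup.inclusion hRX u :=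
        Subtype.ext (Subgroup.mem_centralizer_iff.mp cc.2 (u : S) u.2)
      show θ u * ψ ⟨(cc : S), hCX cc.2⟩ = ψ ⟨(cc : S), hCX cc.2⟩ * θ u
      calc θ u * ψ ⟨(cc : S), hCX cc.2⟩
          = ψ (Subgroup.inclusion hRX u * ⟨(cc : S), hCX cc.2⟩) := by rw [map_mul]; rfl
        _ = ψ (⟨(cc : S), hCX cc.2⟩ * Subgroup.inclusion hRX u) := by rw [hcomm]
        _ = ψ ⟨(cc : S), hCX cc.2⟩ * θ u := by rw [map_mul]; rfl
    have hCle : Nat.card (Subgroup.centralizer (R : Set S))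
        ≤ Nat.card (Subgroup.centralizer (R' : Set S)) := by
      have hinjf : Function.Injective
          (fun cc : ↥(Subgroup.centralizer (R : Set S)) =>
            (⟨ψ ⟨(cc : S), hCX cc.2⟩, hmemC cc⟩ : ↥(Subgroup.centralizer (R' : Set S)))) := by
        intro aA bB hab
        have h2 := F.injective' hψ (congrArg Subtype.val hab)
        exact Subtype.ext (Subtype.mk_eq_mk.mp h2)
      exact Nat.card_le_card_of_injective _ hinjf
    have hCeq : Nat.card (Subgroup.centralizer (R' : Set S))
        = Nat.card (Subgroup.centralizer (R : Set S)) :=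
      le_antisymm (hRc R' hconjRR') hCle
    have hR'c : F.Hom.FullyCentralized R' := by
      intro Q hQ
      calc Nat.card (Subgroup.centralizer (Q : Set S))
          ≤ Nat.card (Subgroup.centralizer (R : Set S)) :=
            hRc Q (F.isConj_trans hconjRR' hQ)
        _ = Nat.card (Subgroup.centralizer (R' : Set S)) := hCeq.symm
    have hPR' : F.Hom.IsConj P R' := F.isConj_trans hPR hconjRR'
    have hmaxR' : Nat.card (KS R') ≤ Nat.card (KS R) := hRm ⟨R', hPR', hR'c⟩
    -- transport Aut_S(R) and aa into Aut_S(R')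
    set eθ : ↥R ≃* ↥R' := F.equivOfHom hθR' rfl with heθdef
    set Φ : MulAut ↥R ≃* MulAut ↥R' := mulAutCongr eθ with hΦdef
    have hextR' : ∀ g g' : MulAut ↥R', (∀ u : ↥R, g (eθ u) = g' (eθ u)) → g = g' := by
      intro g g' h
      apply MulEquiv.ext
      intro v
      have h2 := h (eθ.symm v)
      rwa [MulEquiv.apply_symm_apply] at h2
    have hθval : ∀ u : ↥R, ((eθ u) : S) = θ u := fun u => rfl
    have hθsurj : ∀ r' : S, r' ∈ R' → ∃ u : ↥R, θ u = r' := fun r' hr' => hr'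
    have hmapKS : ∀ g ∈ KS R, Φ g ∈ KS R' := by
      rintro _ ⟨x, rfl⟩
      have hxX : (x : S) ∈ (Nphi R uα) := by
        show (x : S) ∈ Nphi R uα
        rw [hNphi]
        exact x.2
      set z : S := ψ ⟨(x : S), hxX⟩ with hzdef
      have hconjz : ∀ u : ↥R, z * θ u * z⁻¹ = θ ⟨(x : S) * (u : S) * (x : S)⁻¹,
          (Subgroup.mem_normalizer_iff.mp x.2 (u : S)).mp u.2⟩ := by
        intro u
        have hX1 : (⟨(x : S), hxX⟩ : ↥(Nphi R uα)) * Subgroup.inclusion hRX u * (⟨(x : S), hxX⟩ : ↥(Nphi R uα))⁻¹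
            = Subgroup.inclusion hRX ⟨(x : S) * (u : S) * (x : S)⁻¹,
              (Subgroup.mem_normalizer_iff.mp x.2 (u : S)).mp u.2⟩ := Subtype.ext rfl
        calc z * θ u * z⁻¹
            = ψ ((⟨(x : S), hxX⟩ : ↥(Nphi R uα)) * Subgroup.inclusion hRX u * (⟨(x : S), hxX⟩ : ↥(Nphi R uα))⁻¹) := by
              rw [map_mul, map_mul, map_inv]; rfl
          _ = _ := by rw [hX1]; rfl
      have hzn : z ∈ (Subgroup.normalizer (R' : Set S)) := by
        apply Subgroup.mem_normalizer_fintype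
        intro r' hr'
        obtain ⟨u, rfl⟩ := hθsurj r' hr'
        rw [hconjz u]
        exact ⟨_, rfl⟩
      refine ⟨⟨z, hzn⟩, ?_⟩
      apply hextR'
      intro u
      have h1 : Φ (R.normalizerMonoidHom x) (eθ u) = eθ (R.normalizerMonoidHom x u) :=
        mulAutCongr_apply eθ _ u
      rw [h1]
      apply Subtype.ext
      show z * θ u * z⁻¹ = (eθ (R.normalizerMonoidHom x u) : S)
      rw [hθval, hconjz u]
      rfl
    have hmapaa : Φ aa ∈ KS R' := by
      have hconjs : ∀ u : ↥R, s * θ u * s⁻¹ = θ (aa u) := by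
        intro u
        have h1 : ψ (β (Subgroup.inclusion hRX u)) = s * ψ (Subgroup.inclusion hRX u) * s⁻¹ :=
          hkey _
        rw [hβres u] at h1
        exact h1.symm
      have hsn : s ∈ (Subgroup.normalizer (R' : Set S)) := by
        apply Subgroup.mem_normalizer_fintype
        intro r' hr'
        obtain ⟨u, rfl⟩ := hθsurj r' hr'
        rw [hconjs u]
        exact ⟨_, rfl⟩
      refine ⟨⟨s, hsn⟩, ?_⟩
      apply hextR'
      intro u
      have h1 : Φ aa (eθ u) = eθ (aa u) := mulAutCongr_apply eθ aa u
      rw [h1]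
      apply Subtype.ext
      show s * θ u * s⁻¹ = (eθ (aa u) : S)
      rw [hθval, hconjs u]
    -- the contradiction
    set L := KS R ⊔ Subgroup.zpowers aa with hLdef
    have hKL : Nat.card (KS R) < Nat.card L := by
      refine lt_of_le_of_ne (Subgroup.card_le_of_le le_sup_left) (fun he => haanotK ?_)
      have h2 : KS R = L := Subgroup.eq_of_le_of_card_ge le_sup_left he.ge
      rw [h2]
      exact le_sup_right (a := KS R) (Subgroup.mem_zpowers aa)
    have hLmap : Subgroup.map Φ.toMonoidHom L ≤ KS R' := by
      rw [hLdef, Subgroup.map_sup]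
      apply sup_le
      · rintro _ ⟨g, hg, rfl⟩
        exact hmapKS g hg
      · rintro _ ⟨g, hg, rfl⟩
        obtain ⟨k, rfl⟩ := Subgroup.mem_zpowers_iff.mp hg
        rw [map_zpow]
        exact zpow_mem hmapaa k
    have hfinal : Nat.card L ≤ Nat.card (KS R') := by
      calc Nat.card L = Nat.card (Subgroup.map Φ.toMonoidHom L) :=
            Nat.card_congr (Subgroup.equivMapOfInjective L Φ.toMonoidHom Φ.injective).toEquiv
        _ ≤ Nat.card (KS R') := Subgroup.card_le_of_le hLmap
    omega

end FusionSystem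
end RSAux6
section RSAux7
open Subgroup
variable {S : Type*} [Group S] [Finite S]

namespace FusionSystem
variable (F : FusionSystem S)

theorem axiomI_of {p : ℕ} (hp : p.Prime) (hS : IsPGroup p S)
    (hIS : F.AxiomIS p) (hII : F.AxiomII) : F.AxiomI p := by
  intro P hPn
  obtain ⟨Q, hPQ, hQc, hQa⟩ := F.exists_fc_fa hp hS hIS hII P
  obtain ⟨hC, hN⟩ := F.transport hp hS hII hPQ hQc
    ((F.autSIsSylow_iff_card hp hS Q).mp hQa) hPn
  constructor
  · intro Q' hQ'
    calc Nat.card (Subgroup.centralizer (Q' : Set S))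
        ≤ Nat.card (Subgroup.centralizer (Q : Set S)) :=
          hQc Q' (F.isConj_trans (F.isConj_symm hPQ) hQ')
      _ = Nat.card (Subgroup.centralizer (P : Set S)) := hC.symm
  · apply (F.autSIsSylow_iff_card hp hS P).mpr
    obtain ⟨k, hk, hcard⟩ := (F.autSIsSylow_iff_card hp hS Q).mp hQa
    refine ⟨k, hk, ?_⟩
    have h1 : Nat.card (F.FAut P) = Nat.card (F.FAut Q) := F.card_FAut_eq_of_isConj hPQ
    have h2 : Nat.card (KS P) = Nat.card (KS Q) := card_KS_eq_of_transport hC hN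
    rw [h1, h2]
    exact hcard

theorem top_fully_normalized : F.Hom.FullyNormalized (⊤ : Subgroup S) := by
  intro Q _
  calc Nat.card (Subgroup.normalizer (Q : Set S)) ≤ Nat.card S := Subgroup.card_le_card_group _
    _ = Nat.card (⊤ : Subgroup S) := Subgroup.card_top.symm
    _ ≤ Nat.card (Subgroup.normalizer ((⊤ : Subgroup S) : Set S)) := Subgroup.card_le_of_le Subgroup.le_normalizer

end FusionSystem
end RSAux7

/-- For a fusion system `F` on a finite `p`-group `S`, `F` is saturated
(Axioms I and II) if and only if it satisfies Axiom I_S (the Sylow condition at `S`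
itself) together with Axiom II.  In particular, Axioms I_S and II together imply
Axiom I. -/
theorem saturated_iff_axiomIS_and_axiomII
    (p : ℕ) (hp : p.Prime) (S : Type*) [Group S] [Finite S] (hS : IsPGroup p S)
    (F : FusionSystem S) :
    (F.Saturated p ↔ F.AxiomIS p ∧ F.AxiomII) ∧
      (F.AxiomIS p ∧ F.AxiomII → F.AxiomI p) := by
  constructor
  · constructor
    · rintro ⟨hI, hII⟩
      exact ⟨(hI ⊤ F.top_fully_normalized).2, hII⟩
    · rintro ⟨hIS, hII⟩
      exact ⟨F.axiomI_of hp hS hIS hII, hII⟩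
  · rintro ⟨hIS, hII⟩
    exact F.axiomI_of hp hS hIS hII
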